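/- If (U₁,U₂,<) is a nontrivial coherent extended word equation, then there exists a coherent extended Nielsen transformation that can be applied to it, i.e., some extended Nielsen transformation of (U₁,U₂,<) yields a coherent extended word equation (U'₁,U'₂,<'). -/

import Mathlib

open scoped Classical

namespace ExtWordEq

/-- The type of (candidate) boundary orders: relations on pairs (i,j). -/
abbrev BRel : Type := ℕ × ℕ → ℕ × ℕ → Prop

variable {X : Type*}

/-- The `i`-th side of the word equation (`i = 1` gives `U₁`, anything else `U₂`). -/
def word (U₁ U₂ : List X) (i : ℕ) : List X := if i = 1 then U₁ else U₂

/-- The variable `U_{i,j}` (1-indexed), as an optional value. -/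
def letter (U₁ U₂ : List X) (b : ℕ × ℕ) : Option X := (word U₁ U₂ b.1)[b.2 - 1]?

/-- `b` is a boundary of the word equation `(U₁, U₂)`. -/
def Boundary (U₁ U₂ : List X) (b : ℕ × ℕ) : Prop :=
  (b.1 = 1 ∨ b.1 = 2) ∧ 1 ≤ b.2 ∧ b.2 ≤ (word U₁ U₂ b.1).length

/-- `b` is a boundary of `(U₁, U₂)` or one of the conventional boundaries `(1,0)`, `(2,0)`. -/
def EBoundary (U₁ U₂ : List X) (b : ℕ × ℕ) : Prop :=
  (b.1 = 1 ∨ b.1 = 2) ∧ b.2 ≤ (word U₁ U₂ b.1).length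

/-- Incomparability `a ≈ b` for a strict order. -/
def Incomp (lt : BRel) (a b : ℕ × ℕ) : Prop := ¬ lt a b ∧ ¬ lt b a

/-- `lt` is a boundary order for the word equation `(U₁, U₂)`:
a strict weak order on the boundaries (together with the conventional boundaries
`(1,0) ≈ (2,0)`), extending `(i,j) < (i,j+1)` and with `(1,m) ≈ (2,n)`. -/
structure BoundaryOrder (U₁ U₂ : List X) (lt : BRel) : Prop where
  irrefl : ∀ a, EBoundary U₁ U₂ a → ¬ lt a a
  trans : ∀ a b c, EBoundary U₁ U₂ a → EBoundary U₁ U₂ b → EBoundary U₁ U₂ c →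
    lt a b → lt b c → lt a c
  incomp_trans : ∀ a b c, EBoundary U₁ U₂ a → EBoundary U₁ U₂ b → EBoundary U₁ U₂ c →
    Incomp lt a b → Incomp lt b c → Incomp lt a c
  succ : ∀ i j : ℕ, EBoundary U₁ U₂ (i, j + 1) → lt (i, j) (i, j + 1)
  top : Incomp lt (1, U₁.length) (2, U₂.length)
  bot : Incomp lt (1, 0) (2, 0)

/-- `L(U_{i,1} U_{i,2} ⋯ U_{i,j})` where `L` is the additive extension of a length
assignment on variables. -/
def prefixLen (U₁ U₂ : List X) (L : X → ℕ) (b : ℕ × ℕ) : ℕ :=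
  (((word U₁ U₂ b.1).take b.2).map L).sum

/-- The extended word equation `(U₁, U₂, lt)` is coherent. -/
def Coherent (U₁ U₂ : List X) (lt : BRel) : Prop :=
  ∃ L : X → ℕ, (∀ x, 0 < L x) ∧
    ∀ a b, Boundary U₁ U₂ a → Boundary U₁ U₂ b →
      (lt a b ↔ prefixLen U₁ U₂ L a < prefixLen U₁ U₂ L b)

/-- The boundary `a` cuts the boundary `b`. -/
def Cuts (U₁ U₂ : List X) (lt : BRel) (a b : ℕ × ℕ) : Prop :=
  Boundary U₁ U₂ a ∧ Boundary U₁ U₂ b ∧ a ≠ b ∧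
    lt (a.1, a.2 - 1) b ∧ lt (b.1, b.2 - 1) a

/-- The boundary `a` mirrors the boundary `b`. -/
def Mirrors (U₁ U₂ : List X) (lt : BRel) (a b : ℕ × ℕ) : Prop :=
  Boundary U₁ U₂ a ∧ Boundary U₁ U₂ b ∧ letter U₁ U₂ a = letter U₁ U₂ b ∧
    (¬ Incomp lt a b ∨ ¬ Incomp lt (a.1, a.2 - 1) (b.1, b.2 - 1))

/-- Edge relation of the cut graph `G_{U₁,U₂,<}`. -/
def CutEdge (U₁ U₂ : List X) (lt : BRel) (a b : ℕ × ℕ) : Prop :=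
  ∃ c, Cuts U₁ U₂ lt a c ∧ Mirrors U₁ U₂ lt c b

/-- `w 0, w 1, …, w n` is a cycle (of length `n ≥ 1`) in the cut graph. -/
def IsCycle (U₁ U₂ : List X) (lt : BRel) (n : ℕ) (w : ℕ → ℕ × ℕ) : Prop :=
  0 < n ∧ w n = w 0 ∧ ∀ k < n, CutEdge U₁ U₂ lt (w k) (w (k + 1))

/-- The cut graph `G_{U₁,U₂,<}` is acyclic. -/
def Acyclic (U₁ U₂ : List X) (lt : BRel) : Prop :=
  ¬ ∃ n w, IsCycle U₁ U₂ lt n w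

variable [DecidableEq X]

/-- Case I extended Nielsen transformation (here `x = U_{1,1}`, `y = U_{2,1}`,
and `T(y) = x`). -/
def NielsenI (U₁ U₂ : List X) (lt : BRel) (U₁' U₂' : List X) (lt' : BRel) : Prop :=
  ∃ x y : X, U₁.head? = some x ∧ U₂.head? = some y ∧
    Incomp lt (1, 1) (2, 1) ∧
    U₁' = (U₁.map fun z => if z = y then x else z).tail ∧
    U₂' = (U₂.map fun z => if z = y then x else z).tail ∧
    BoundaryOrder U₁' U₂' lt' ∧
    ∀ a b : ℕ × ℕ, EBoundary U₁' U₂' a → EBoundary U₁' U₂' b →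
      (lt' a b ↔ lt (a.1, a.2 + 1) (b.1, b.2 + 1))

/-- The substitution `T(x) = y x` (identity on other variables), applied to a word. -/
def expand (x y : X) (l : List X) : List X :=
  l.flatMap fun z => if z = x then [y, x] else [z]

/-- The map `μ(i,j) = j + #{j' ≤ j : U_{i,j'} = x} − 1` (as a map on boundaries),
where `x = U_{1,1}`. -/
def mu (U₁ U₂ : List X) (x : X) (b : ℕ × ℕ) : ℕ × ℕ :=
  (b.1, b.2 + ((word U₁ U₂ b.1).take b.2).count x - 1)

/-- The map `ν(i,j) = j − #{j' ≤ j : U'_{i,j'} = x} + 1` (as a map on boundaries),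
where `x = U_{1,1}`. -/
def nu (U₁' U₂' : List X) (x : X) (b : ℕ × ℕ) : ℕ × ℕ :=
  (b.1, b.2 - ((word U₁' U₂' b.1).take b.2).count x + 1)

/-- Membership in `B⁻ = B ∖ {(2,1)}`. -/
def Bminus (U₁ U₂ : List X) (b : ℕ × ℕ) : Prop := Boundary U₁ U₂ b ∧ b ≠ (2, 1)

/-- Membership in `B'⁻ = {(i, μ(i,j)) : (i,j) ∈ B⁻}` (`x = U_{1,1}`). -/
def Bpminus (U₁ U₂ : List X) (x : X) (b' : ℕ × ℕ) : Prop :=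
  ∃ b, Bminus U₁ U₂ b ∧ mu U₁ U₂ x b = b'

/-- Case II extended Nielsen transformation, with the heads `x = U_{1,1}`,
`y = U_{2,1}` made explicit. -/
def NielsenIIxy (U₁ U₂ : List X) (lt : BRel) (U₁' U₂' : List X) (lt' : BRel)
    (x y : X) : Prop :=
  U₁.head? = some x ∧ U₂.head? = some y ∧
  lt (2, 1) (1, 1) ∧
  U₁' = (expand x y U₁).tail ∧
  U₂' = (expand x y U₂).tail ∧
  BoundaryOrder U₁' U₂' lt' ∧
  ∀ a b, Bpminus U₁ U₂ x a → Bpminus U₁ U₂ x b →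
    (lt' a b ↔ lt (nu U₁' U₂' x a) (nu U₁' U₂' x b))

/-- Case II extended Nielsen transformation. -/
def NielsenII (U₁ U₂ : List X) (lt : BRel) (U₁' U₂' : List X) (lt' : BRel) : Prop :=
  ∃ x y : X, NielsenIIxy U₁ U₂ lt U₁' U₂' lt' x y

/-- The dual boundary order. -/
def dualRel (lt : BRel) : BRel := fun a b => lt (3 - a.1, a.2) (3 - b.1, b.2)

/-- Case III extended Nielsen transformation: case II applied to the dual,
then dualized back. -/
def NielsenIII (U₁ U₂ : List X) (lt : BRel) (U₁' U₂' : List X) (lt' : BRel) : Prop :=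
  NielsenII U₂ U₁ (dualRel lt) U₂' U₁' (dualRel lt')

/-- `(U₁', U₂', lt')` is an extended Nielsen transformation of the nontrivial coherent
extended word equation `(U₁, U₂, lt)`. -/
def ExtNielsen (U₁ U₂ : List X) (lt : BRel) (U₁' U₂' : List X) (lt' : BRel) : Prop :=
  U₁ ≠ [] ∧ U₂ ≠ [] ∧ BoundaryOrder U₁ U₂ lt ∧ Coherent U₁ U₂ lt ∧
    (NielsenI U₁ U₂ lt U₁' U₂' lt' ∨ NielsenII U₁ U₂ lt U₁' U₂' lt' ∨
      NielsenIII U₁ U₂ lt U₁' U₂' lt')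

/-- A coherent extended Nielsen transformation. -/
def CohNielsen (U₁ U₂ : List X) (lt : BRel) (U₁' U₂' : List X) (lt' : BRel) : Prop :=
  ExtNielsen U₁ U₂ lt U₁' U₂' lt' ∧ Coherent U₁' U₂' lt'

/-- `(U₁, U₂, lt)` is (strongly) terminating: there is no infinite sequence of coherent
extended Nielsen transformations starting from it. -/
def Terminating (U₁ U₂ : List X) (lt : BRel) : Prop :=
  ¬ ∃ f : ℕ → List X × List X × BRel,
    f 0 = (U₁, U₂, lt) ∧
    ∀ n, CohNielsen (f n).1 (f n).2.1 (f n).2.2 (f (n + 1)).1 (f (n + 1)).2.1 (f (n + 1)).2.2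


/-! ### Auxiliary lemmas -/

section Aux
variable {U₁ U₂ : List X} {L : X → ℕ}

lemma word_one (U₁ U₂ : List X) : word U₁ U₂ 1 = U₁ := by simp [word]

lemma word_two (U₁ U₂ : List X) : word U₁ U₂ 2 = U₂ := by simp [word]

lemma word_swap (U₁ U₂ : List X) {i : ℕ} (hi : i = 1 ∨ i = 2) :
    word U₂ U₁ i = word U₁ U₂ (3 - i) := by
  rcases hi with rfl | rfl <;> simp [word]

lemma prefixLen_zero (i : ℕ) : prefixLen U₁ U₂ L (i, 0) = 0 := by
  simp [prefixLen]

lemma prefixLen_succ {i j : ℕ} (h : j < (word U₁ U₂ i).length) :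
    prefixLen U₁ U₂ L (i, j + 1) =
      prefixLen U₁ U₂ L (i, j) + L ((word U₁ U₂ i)[j]) := by
  unfold prefixLen
  rw [List.take_succ, List.getElem?_eq_getElem h, Option.toList_some, List.map_append,
    List.sum_append, List.map_singleton, List.sum_singleton]

lemma prefixLen_lt_succ (hL : ∀ x, 0 < L x) {i j : ℕ}
    (h : j + 1 ≤ (word U₁ U₂ i).length) :
    prefixLen U₁ U₂ L (i, j) < prefixLen U₁ U₂ L (i, j + 1) := by
  rw [prefixLen_succ (by omega)]
  exact Nat.lt_add_of_pos_right (hL _)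

/-- The canonical length-comparison relation. -/
def lenRel (U₁ U₂ : List X) (L : X → ℕ) : BRel :=
  fun a b => prefixLen U₁ U₂ L a < prefixLen U₁ U₂ L b

lemma lenRel_boundaryOrder (hL : ∀ x, 0 < L x)
    (htop : prefixLen U₁ U₂ L (1, U₁.length) = prefixLen U₁ U₂ L (2, U₂.length)) :
    BoundaryOrder U₁ U₂ (lenRel U₁ U₂ L) where
  irrefl := fun a _ => lt_irrefl _
  trans := fun a b c _ _ _ => lt_trans
  incomp_trans := by
    intro a b c _ _ _ hab hbc
    obtain ⟨h1, h2⟩ := hab; obtain ⟨h3, h4⟩ := hbc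
    constructor <;> unfold lenRel at * <;> omega
  succ := fun i j h => prefixLen_lt_succ hL h.2
  top := by constructor <;> unfold lenRel <;> omega
  bot := by constructor <;> simp [lenRel, prefixLen_zero]

lemma lenRel_coherent (hL : ∀ x, 0 < L x) :
    Coherent U₁ U₂ (lenRel U₁ U₂ L) :=
  ⟨L, hL, fun _ _ _ _ => Iff.rfl⟩

end Aux
section Expand
variable {x y : X} {L : X → ℕ}

lemma expand_nil : expand x y ([] : List X) = [] := rfl

lemma expand_cons (z : X) (l : List X) :
    expand x y (z :: l) = (if z = x then [y, x] else [z]) ++ expand x y l := by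
  simp [expand]

lemma expand_append (l m : List X) :
    expand x y (l ++ m) = expand x y l ++ expand x y m := by
  simp [expand]

lemma expand_length (l : List X) :
    (expand x y l).length = l.length + l.count x := by
  induction l with
  | nil => rfl
  | cons z l ih =>
    rw [expand_cons]
    by_cases hz : z = x <;>
      simp [hz, ih, List.count_cons] <;> omega

lemma expand_count (hyx : y ≠ x) (l : List X) :
    (expand x y l).count x = l.count x := by
  induction l with
  | nil => rfl
  | cons z l ih =>
    rw [expand_cons]
    by_cases hz : z = x <;> simp [hz, ih, List.count_cons, hyx]

lemma expand_sum (hyx : y ≠ x) (hle : L y ≤ L x) (l : List X) :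
    ((expand x y l).map (fun z => if z = x then L x - L y else L z)).sum
      = (l.map L).sum := by
  induction l with
  | nil => rfl
  | cons z l ih =>
    rw [expand_cons]
    by_cases hz : z = x <;> simp [hz, ih, hyx] <;> omega

lemma expand_take {j : ℕ} (l : List X) (hj : j ≤ l.length) :
    (expand x y l).take (j + (l.take j).count x) = expand x y (l.take j) := by
  have h : expand x y l = expand x y (l.take j) ++ expand x y (l.drop j) := by
    rw [← expand_append, List.take_append_drop]
  rw [h, List.take_left' (by rw [expand_length, List.length_take]; omega)]

end Expand
section Dual
variable {U₁ U₂ : List X} {lt : BRel}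

lemma eBoundary_swap {a : ℕ × ℕ} (h : EBoundary U₂ U₁ a) :
    EBoundary U₁ U₂ (3 - a.1, a.2) := by
  obtain ⟨hi, hj⟩ := h
  refine ⟨by omega, ?_⟩
  rwa [← word_swap U₁ U₂ hi]

lemma boundary_swap {a : ℕ × ℕ} (h : Boundary U₂ U₁ a) :
    Boundary U₁ U₂ (3 - a.1, a.2) := by
  obtain ⟨hi, hj⟩ := h
  refine ⟨by omega, hj.1, ?_⟩
  rw [← word_swap U₁ U₂ hi]; exact hj.2

lemma prefixLen_swap (L : X → ℕ) {a : ℕ × ℕ} (hi : a.1 = 1 ∨ a.1 = 2) :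
    prefixLen U₂ U₁ L a = prefixLen U₁ U₂ L (3 - a.1, a.2) := by
  unfold prefixLen
  rw [word_swap U₁ U₂ hi]

lemma dual_boundaryOrder (hbo : BoundaryOrder U₁ U₂ lt) :
    BoundaryOrder U₂ U₁ (dualRel lt) where
  irrefl := fun a ha => hbo.irrefl _ (eBoundary_swap ha)
  trans := fun a b c ha hb hc =>
    hbo.trans _ _ _ (eBoundary_swap ha) (eBoundary_swap hb) (eBoundary_swap hc)
  incomp_trans := fun a b c ha hb hc hab hbc =>
    hbo.incomp_trans _ _ _ (eBoundary_swap ha) (eBoundary_swap hb) (eBoundary_swap hc)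
      hab hbc
  succ := fun i j h => hbo.succ (3 - i) j (eBoundary_swap h)
  top := ⟨hbo.top.2, hbo.top.1⟩
  bot := ⟨hbo.bot.2, hbo.bot.1⟩

lemma dual_coherent (h : Coherent U₁ U₂ lt) : Coherent U₂ U₁ (dualRel lt) := by
  obtain ⟨L, hL, hiff⟩ := h
  refine ⟨L, hL, fun a b ha hb => ?_⟩
  rw [prefixLen_swap L ha.1, prefixLen_swap L hb.1]
  exact hiff _ _ (boundary_swap ha) (boundary_swap hb)

end Dual

section Congr
variable {U₁ U₂ U₁' U₂' : List X} {lt : BRel}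

/-- Two relations agreeing on pairs with first component in `{1,2}`. -/
def AgreeOn (r s : BRel) : Prop :=
  ∀ a b : ℕ × ℕ, (a.1 = 1 ∨ a.1 = 2) → (b.1 = 1 ∨ b.1 = 2) → (r a b ↔ s a b)

lemma boundaryOrder_congr {r s : BRel} (hrs : AgreeOn r s)
    (h : BoundaryOrder U₁ U₂ r) : BoundaryOrder U₁ U₂ s where
  irrefl := fun a ha => by rw [← hrs a a ha.1 ha.1]; exact h.irrefl a ha
  trans := fun a b c ha hb hc hab hbc =>
    (hrs a c ha.1 hc.1).mp (h.trans a b c ha hb hc ((hrs a b ha.1 hb.1).mpr hab)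
      ((hrs b c hb.1 hc.1).mpr hbc))
  incomp_trans := fun a b c ha hb hc hab hbc => by
    have e : ∀ u v : ℕ × ℕ, (u.1 = 1 ∨ u.1 = 2) → (v.1 = 1 ∨ v.1 = 2) →
        (Incomp r u v ↔ Incomp s u v) := fun u v hu hv => by
      unfold Incomp; rw [hrs u v hu hv, hrs v u hv hu]
    exact (e a c ha.1 hc.1).mp (h.incomp_trans a b c ha hb hc
      ((e a b ha.1 hb.1).mpr hab) ((e b c hb.1 hc.1).mpr hbc))
  succ := fun i j hj => (hrs (i, j) (i, j + 1) hj.1 hj.1).mp (h.succ i j hj)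
  top := by
    have := h.top
    unfold Incomp at *
    rw [hrs _ _ (Or.inl rfl) (Or.inr rfl), hrs _ _ (Or.inr rfl) (Or.inl rfl)] at this
    exact this
  bot := by
    have := h.bot
    unfold Incomp at *
    rw [hrs _ _ (Or.inl rfl) (Or.inr rfl), hrs _ _ (Or.inr rfl) (Or.inl rfl)] at this
    exact this

lemma nielsenII_congr {r s : BRel} (hrs : AgreeOn r s)
    (h : NielsenII U₁ U₂ lt U₁' U₂' r) : NielsenII U₁ U₂ lt U₁' U₂' s := by
  obtain ⟨x, y, hx, hy, hlt, he1, he2, hbo, hiff⟩ := h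
  refine ⟨x, y, hx, hy, hlt, he1, he2, boundaryOrder_congr hrs hbo, fun a b ha hb => ?_⟩
  obtain ⟨a0, ha0, rfl⟩ := ha
  obtain ⟨b0, hb0, rfl⟩ := hb
  rw [← hrs _ _ (by simpa [mu] using ha0.1.1) (by simpa [mu] using hb0.1.1)]
  exact hiff _ _ ⟨a0, ha0, rfl⟩ ⟨b0, hb0, rfl⟩

lemma dualRel_dualRel_agree (r : BRel) : AgreeOn r (dualRel (dualRel r)) := by
  intro a b ha hb
  unfold dualRel
  have h1 : (3 - (3 - a.1), a.2) = a := by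
    obtain ⟨i, j⟩ := a; rcases ha with h | h <;> simp_all
  have h2 : (3 - (3 - b.1), b.2) = b := by
    obtain ⟨i, j⟩ := b; rcases hb with h | h <;> simp_all
  rw [h1, h2]

end Congr
section CaseII
variable {lt : BRel}

lemma caseII (U₁ U₂ : List X) (lt : BRel) (h₁ : U₁ ≠ []) (h₂ : U₂ ≠ [])
    (hbo : BoundaryOrder U₁ U₂ lt) (hcoh : Coherent U₁ U₂ lt)
    (hlt : lt (2, 1) (1, 1)) :
    ∃ (U₁' U₂' : List X) (lt' : BRel),
      NielsenII U₁ U₂ lt U₁' U₂' lt' ∧ Coherent U₁' U₂' lt' := by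
  obtain ⟨L, hL, hiff⟩ := hcoh
  obtain ⟨x, t₁, rfl⟩ := List.exists_cons_of_ne_nil h₁
  obtain ⟨y, t₂, rfl⟩ := List.exists_cons_of_ne_nil h₂
  have b11 : Boundary (x :: t₁) (y :: t₂) (1, 1) := ⟨Or.inl rfl, le_refl 1, by simp [word]⟩
  have b21 : Boundary (x :: t₁) (y :: t₂) (2, 1) := ⟨Or.inr rfl, le_refl 1, by simp [word]⟩
  have hyx : L y < L x := by
    have := (hiff _ _ b21 b11).mp hlt
    simpa [prefixLen, word] using this
  have hne : y ≠ x := fun h => by rw [h] at hyx; omega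
  set L' : X → ℕ := fun z => if z = x then L x - L y else L z with hL'def
  have hL' : ∀ z, 0 < L' z := by
    intro z
    by_cases h : z = x <;> simp [hL'def, h] <;> [omega; exact hL z]
  set U₁' : List X := x :: expand x y t₁ with hU₁'
  set U₂' : List X := expand x y t₂ with hU₂'
  have he1 : U₁' = (expand x y (x :: t₁)).tail := by rw [expand_cons]; simp [hU₁']
  have he2 : U₂' = (expand x y (y :: t₂)).tail := by rw [expand_cons]; simp [hne, hU₂']
  have hD : ∀ i : ℕ, expand x y (word (x :: t₁) (y :: t₂) i) = y :: word U₁' U₂' i := by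
    intro i
    by_cases h : i = 1 <;> simp [word, h, expand_cons, hne, hU₁', hU₂']
  have hlen : ∀ i : ℕ, (word U₁' U₂' i).length + 1 =
      (word (x :: t₁) (y :: t₂) i).length + (word (x :: t₁) (y :: t₂) i).count x := by
    intro i
    have := congrArg List.length (hD i)
    rw [expand_length] at this
    simp at this
    omega
  -- key prefix correspondence
  have hexp : ∀ i j : ℕ, 1 ≤ j → j ≤ (word (x :: t₁) (y :: t₂) i).length →
      y :: (word U₁' U₂' i).take (j + ((word (x :: t₁) (y :: t₂) i).take j).count x - 1)
        = expand x y ((word (x :: t₁) (y :: t₂) i).take j) := by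
    intro i j hj1 hj2
    have h := expand_take (x := x) (y := y) (word (x :: t₁) (y :: t₂) i) hj2
    rw [hD i, show j + ((word (x :: t₁) (y :: t₂) i).take j).count x
        = (j + ((word (x :: t₁) (y :: t₂) i).take j).count x - 1) + 1 by omega,
      List.take_succ_cons] at h
    exact h
  have hE : ∀ i j : ℕ, 1 ≤ j → j ≤ (word (x :: t₁) (y :: t₂) i).length →
      prefixLen U₁' U₂' L' (mu (x :: t₁) (y :: t₂) x (i, j)) + L y
        = prefixLen (x :: t₁) (y :: t₂) L (i, j) := by
    intro i j hj1 hj2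
    have hsum := congrArg (fun l => (l.map L').sum) (hexp i j hj1 hj2)
    simp only [List.map_cons, List.sum_cons, hL'def] at hsum
    rw [expand_sum hne (le_of_lt hyx)] at hsum
    simp only [if_neg hne] at hsum
    unfold mu prefixLen
    simp only [hL'def]
    omega
  have hF : ∀ i j : ℕ, 1 ≤ j → j ≤ (word (x :: t₁) (y :: t₂) i).length →
      nu U₁' U₂' x (mu (x :: t₁) (y :: t₂) x (i, j)) = (i, j) := by
    intro i j hj1 hj2
    have hcnt := congrArg (List.count x) (hexp i j hj1 hj2)
    rw [expand_count hne, List.count_cons_of_ne hne] at hcnt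
    unfold mu nu
    simp only [Prod.mk.injEq]
    rw [hcnt]
    exact ⟨trivial, by omega⟩
  have hmutop : ∀ i : ℕ, mu (x :: t₁) (y :: t₂) x (i, (word (x :: t₁) (y :: t₂) i).length)
      = (i, (word U₁' U₂' i).length) := by
    intro i
    have h := hlen i
    unfold mu
    simp only [List.take_length, Prod.mk.injEq]
    exact ⟨trivial, by omega⟩
  have hlen1 : ∀ i : ℕ, 1 ≤ (word (x :: t₁) (y :: t₂) i).length := by
    intro i; by_cases h : i = 1 <;> simp [word, h]
  -- old top equality
  have bm : Boundary (x :: t₁) (y :: t₂) (1, (x :: t₁).length) :=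
    ⟨Or.inl rfl, by simp [word], by simp [word]⟩
  have bn : Boundary (x :: t₁) (y :: t₂) (2, (y :: t₂).length) :=
    ⟨Or.inr rfl, by simp [word], by simp [word]⟩
  have htopold : prefixLen (x :: t₁) (y :: t₂) L (1, (x :: t₁).length)
      = prefixLen (x :: t₁) (y :: t₂) L (2, (y :: t₂).length) := by
    have e1 : ¬ _ := fun h => hbo.top.1 ((hiff _ _ bm bn).mpr h)
    have e2 : ¬ _ := fun h => hbo.top.2 ((hiff _ _ bn bm).mpr h)
    omega
  have hw1 : word (x :: t₁) (y :: t₂) 1 = x :: t₁ := word_one _ _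
  have hw2 : word (x :: t₁) (y :: t₂) 2 = y :: t₂ := word_two _ _
  have e1 := hE 1 ((word (x :: t₁) (y :: t₂) 1).length) (hlen1 1) le_rfl
  have e2 := hE 2 ((word (x :: t₁) (y :: t₂) 2).length) (hlen1 2) le_rfl
  rw [hmutop 1] at e1
  rw [hmutop 2] at e2
  have htop' : prefixLen U₁' U₂' L' (1, U₁'.length) = prefixLen U₁' U₂' L' (2, U₂'.length) := by
    have w1 : word U₁' U₂' 1 = U₁' := word_one _ _
    have w2 : word U₁' U₂' 2 = U₂' := word_two _ _
    rw [w1] at e1; rw [w2] at e2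
    rw [hw1] at e1; rw [hw2] at e2
    omega
  refine ⟨U₁', U₂', lenRel U₁' U₂' L', ⟨x, y, rfl, rfl, hlt, he1, he2,
    lenRel_boundaryOrder hL' htop', ?_⟩, lenRel_coherent hL'⟩
  rintro a b ⟨⟨i, j⟩, ⟨hba, -⟩, rfl⟩ ⟨⟨i', j'⟩, ⟨hbb, -⟩, rfl⟩
  obtain ⟨hia, hja1, hja2⟩ := hba
  obtain ⟨hib, hjb1, hjb2⟩ := hbb
  rw [hF i j hja1 hja2, hF i' j' hjb1 hjb2]
  have ea := hE i j hja1 hja2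
  have eb := hE i' j' hjb1 hjb2
  rw [hiff _ _ ⟨hia, hja1, hja2⟩ ⟨hib, hjb1, hjb2⟩]
  show prefixLen U₁' U₂' L' _ < prefixLen U₁' U₂' L' _ ↔ _
  omega

end CaseII
section CaseI

lemma caseI (U₁ U₂ : List X) (lt : BRel) (h₁ : U₁ ≠ []) (h₂ : U₂ ≠ [])
    (hbo : BoundaryOrder U₁ U₂ lt) (hcoh : Coherent U₁ U₂ lt)
    (hinc : Incomp lt (1, 1) (2, 1)) :
    ∃ (U₁' U₂' : List X) (lt' : BRel),
      NielsenI U₁ U₂ lt U₁' U₂' lt' ∧ Coherent U₁' U₂' lt' := by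
  obtain ⟨L, hL, hiff⟩ := hcoh
  obtain ⟨x, t₁, rfl⟩ := List.exists_cons_of_ne_nil h₁
  obtain ⟨y, t₂, rfl⟩ := List.exists_cons_of_ne_nil h₂
  have b11 : Boundary (x :: t₁) (y :: t₂) (1, 1) := ⟨Or.inl rfl, le_refl 1, by simp [word]⟩
  have b21 : Boundary (x :: t₁) (y :: t₂) (2, 1) := ⟨Or.inr rfl, le_refl 1, by simp [word]⟩
  have hxy : L x = L y := by
    have e1 : ¬ _ := fun h => hinc.1 ((hiff _ _ b11 b21).mpr h)
    have e2 : ¬ _ := fun h => hinc.2 ((hiff _ _ b21 b11).mpr h)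
    simp only [prefixLen, word] at e1 e2
    simp at e1 e2
    omega
  set f : X → X := fun z => if z = y then x else z with hf
  have hLf : ∀ z, L (f z) = L z := by
    intro z
    by_cases h : z = y <;> simp [hf, h, ← hxy]
  have hsumf : ∀ l : List X, ((l.map f).map L).sum = (l.map L).sum := by
    intro l
    induction l with
    | nil => rfl
    | cons z l ih => simp only [List.map_cons, List.sum_cons, hLf, ih]
  set U₁' : List X := t₁.map f with hU₁'
  set U₂' : List X := t₂.map f with hU₂'
  have key : ∀ i j : ℕ, prefixLen U₁' U₂' L (i, j) + L x
      = prefixLen (x :: t₁) (y :: t₂) L (i, j + 1) := by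
    intro i j
    by_cases h : i = 1 <;>
      · unfold prefixLen
        simp only [word, h, if_true, if_false, hU₁', hU₂', List.take_succ_cons,
          List.map_cons, List.sum_cons, ← List.map_take, hsumf]
        try rw [hxy]
        omega
  have hlenw : ∀ i : ℕ, (word U₁' U₂' i).length + 1
      = (word (x :: t₁) (y :: t₂) i).length := by
    intro i; by_cases h : i = 1 <;> simp [word, h, hU₁', hU₂']
  have bm : Boundary (x :: t₁) (y :: t₂) (1, (x :: t₁).length) :=
    ⟨Or.inl rfl, by simp [word], by simp [word]⟩
  have bn : Boundary (x :: t₁) (y :: t₂) (2, (y :: t₂).length) :=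
    ⟨Or.inr rfl, by simp [word], by simp [word]⟩
  have htopold : prefixLen (x :: t₁) (y :: t₂) L (1, (x :: t₁).length)
      = prefixLen (x :: t₁) (y :: t₂) L (2, (y :: t₂).length) := by
    have e1 : ¬ _ := fun h => hbo.top.1 ((hiff _ _ bm bn).mpr h)
    have e2 : ¬ _ := fun h => hbo.top.2 ((hiff _ _ bn bm).mpr h)
    omega
  have htop' : prefixLen U₁' U₂' L (1, U₁'.length) = prefixLen U₁' U₂' L (2, U₂'.length) := by
    have e1 := key 1 U₁'.length
    have e2 := key 2 U₂'.length
    have l1 : U₁'.length + 1 = (x :: t₁).length := by simp [hU₁']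
    have l2 : U₂'.length + 1 = (y :: t₂).length := by simp [hU₂']
    rw [l1] at e1; rw [l2] at e2
    omega
  refine ⟨U₁', U₂', lenRel U₁' U₂' L, ⟨x, y, rfl, rfl, hinc, by simp [hU₁', hf],
    by simp [hU₂', hf], lenRel_boundaryOrder hL htop', ?_⟩, lenRel_coherent hL⟩
  rintro ⟨ia, ja⟩ ⟨ib, jb⟩ ha hb
  have Ba : Boundary (x :: t₁) (y :: t₂) (ia, ja + 1) := by
    refine ⟨ha.1, by omega, ?_⟩
    have h1 := hlenw ia
    have h2 := ha.2
    simp only [] at h1 h2 ⊢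
    omega
  have Bb : Boundary (x :: t₁) (y :: t₂) (ib, jb + 1) := by
    refine ⟨hb.1, by omega, ?_⟩
    have h1 := hlenw ib
    have h2 := hb.2
    simp only [] at h1 h2 ⊢
    omega
  rw [hiff _ _ Ba Bb]
  have ka := key ia ja
  have kb := key ib jb
  show prefixLen U₁' U₂' L (ia, ja) < prefixLen U₁' U₂' L (ib, jb) ↔ _
  omega

end CaseI
/-- **Proposition.** Every nontrivial coherent extended word equation admits
a coherent extended Nielsen transformation. -/
theorem exists_coherent_ext_nielsen (U₁ U₂ : List X) (lt : BRel)
    (h₁ : U₁ ≠ []) (h₂ : U₂ ≠ []) (hbo : BoundaryOrder U₁ U₂ lt)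
    (hcoh : Coherent U₁ U₂ lt) :
    ∃ (U₁' U₂' : List X) (lt' : BRel), CohNielsen U₁ U₂ lt U₁' U₂' lt' := by
  by_cases hc1 : lt (2, 1) (1, 1)
  · obtain ⟨U₁', U₂', lt', hN, hc'⟩ := caseII U₁ U₂ lt h₁ h₂ hbo hcoh hc1
    exact ⟨U₁', U₂', lt', ⟨h₁, h₂, hbo, hcoh, Or.inr (Or.inl hN)⟩, hc'⟩
  by_cases hc2 : lt (1, 1) (2, 1)
  · have hdlt : dualRel lt (2, 1) (1, 1) := by
      show lt (3 - 2, 1) (3 - 1, 1)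
      norm_num
      exact hc2
    obtain ⟨V₁', V₂', lt'', hN, hc''⟩ := caseII U₂ U₁ (dualRel lt) h₂ h₁
      (dual_boundaryOrder hbo) (dual_coherent hcoh) hdlt
    refine ⟨V₂', V₁', dualRel lt'', ⟨h₁, h₂, hbo, hcoh, Or.inr (Or.inr ?_)⟩,
      dual_coherent hc''⟩
    exact nielsenII_congr (dualRel_dualRel_agree lt'') hN
  · obtain ⟨U₁', U₂', lt', hN, hc'⟩ := caseI U₁ U₂ lt h₁ h₂ hbo hcoh ⟨hc2, hc1⟩
    exact ⟨U₁', U₂', lt', ⟨h₁, h₂, hbo, hcoh, Or.inl hN⟩, hc'⟩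

end ExtWordEq
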